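/- An ideal I of a ring R is strongly nil clean if and only if I is strongly clean and a - a^2 is nilpotent for all a in I. -/

import Mathlib

/-- An ideal is strongly nil clean if each of its elements is the sum of an idempotent and a
nilpotent that commute. -/
def IsStronglyNilCleanIdeal {R : Type*} [Ring R] (I : TwoSidedIdeal R) : Prop :=
  ∀ x ∈ I, ∃ e n : R, IsIdempotentElem e ∧ IsNilpotent n ∧ e * n = n * e ∧ x = e + n

/-- An ideal is strongly clean if each of its elements is the sum of an idempotent and a
unit that commute. -/
def IsStronglyCleanIdeal {R : Type*} [Ring R] (I : TwoSidedIdeal R) : Prop :=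
  ∀ x ∈ I, ∃ e u : R, IsIdempotentElem e ∧ IsUnit u ∧ e * u = u * e ∧ x = e + u

/-- An ideal is strongly nil clean iff it is strongly clean and `a - a^2` is nilpotent
for every `a` in the ideal. -/
theorem stronglyNilCleanIdeal_iff {R : Type*} [Ring R] (I : TwoSidedIdeal R) :
    IsStronglyNilCleanIdeal I ↔
      IsStronglyCleanIdeal I ∧ ∀ a ∈ I, IsNilpotent (a - a ^ 2) := by
  constructor
  · intro h
    constructor
    · intro x hx
      obtain ⟨e, n, he, hn, hcomm, rfl⟩ := h x hx
      refine ⟨1 - e, 2 * e - 1 + n, ?_, ?_, ?_, by noncomm_ring⟩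
      · exact he.one_sub
      · have hsq : (2 * e - 1) * (2 * e - 1) = 1 := by
          have h4 : (2 * e - 1) * (2 * e - 1) = 4 * (e * e) - 4 * e + 1 := by noncomm_ring
          rw [h4, he.eq]; noncomm_ring
        have hu : IsUnit (2 * e - 1) := ⟨⟨2 * e - 1, 2 * e - 1, hsq, hsq⟩, rfl⟩
        have hce : Commute e n := hcomm
        have : Commute n (2 * e - 1) :=
          ((Commute.ofNat_right n 2).mul_right hce.symm).sub_right (Commute.one_right n)
        exact hn.isUnit_add_left_of_commute hu this
      · unfold IsIdempotentElem at he
        noncomm_ring [hcomm, he]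
    · intro a ha
      obtain ⟨e, n, he, hn, hcomm, rfl⟩ := h a ha
      have key : (e + n) - (e + n) ^ 2 = n * (1 - 2 * e - n) := by
        unfold IsIdempotentElem at he
        noncomm_ring [hcomm, he]
      rw [key]
      refine Commute.isNilpotent_mul_right ?_ hn
      unfold Commute SemiconjBy
      noncomm_ring [hcomm]
  · rintro ⟨hc, hnil⟩ x hx
    obtain ⟨e, u, he, hu, hcomm, rfl⟩ := hc x hx
    refine ⟨1 - e, e + u - (1 - e), he.one_sub, ?_, ?_, by noncomm_ring⟩
    · have h1 : e + u - (1 - e) = ↑hu.unit⁻¹ * ((e + u) ^ 2 - (e + u)) := by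
        have hv : (hu.unit : R) = u := rfl
        have h2 : (hu.unit : R) * (↑hu.unit⁻¹ * ((e + u) ^ 2 - (e + u)))
            = (hu.unit : R) * (e + u - (1 - e)) := by
          rw [← mul_assoc, Units.mul_inv, one_mul, hv]
          unfold IsIdempotentElem at he
          noncomm_ring [hcomm, he]
        have := hu.unit.isUnit.mul_left_cancel h2
        exact this.symm
      rw [h1]
      refine Commute.isNilpotent_mul_left ?_ ?_
      · refine Commute.units_inv_left ?_
        show Commute u _
        have hce : Commute e u := hcomm
        have hu1 : Commute u (e + u) := hce.symm.add_right (Commute.refl u)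
        exact (hu1.pow_right 2).sub_right hu1
      · have := hnil (e + u) hx
        have : IsNilpotent (-(e + u - (e + u) ^ 2)) := this.neg
        simpa using this
    · unfold IsIdempotentElem at he
      noncomm_ring [hcomm, he]
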